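/- Transitive closure preservation along a tree decomposition: Let (T,χ) be a tree decomposition of graph G_Π, and for each node t let F_t be the set of Horn clauses (x≺y) ∧ (y≺z) → (x≺z) for all distinct x,y,z ∈ χ(t). For a node t let F_{≤t} be the union of F_{t'} over all t' in the subtree of t together with F_t, and χ_{≤t} the union of the corresponding bags. Then for any model M of F_{≤t}: whenever there is a path x, p₁, ..., p_o, y in G_Π with all intermediate vertices p₁,...,p_o in χ_{≤t}, with x,y ∈ χ(t), and with (x≺p₁), (p₁≺p₂), ..., (p_o≺y) all in M, then (x≺y) ∈ M. -/

import Mathlib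

/-- A tree decomposition of a graph `G` over an index graph `T`. -/
structure TreeDecomp {V : Type*} {ι : Type*} [DecidableEq V]
    (G : SimpleGraph V) (T : SimpleGraph ι) where
  bag : ι → Finset V
  isTree : T.IsTree
  vertexCover : ∀ v : V, ∃ t : ι, v ∈ bag t
  edgeCover : ∀ ⦃u v : V⦄, G.Adj u v → ∃ t : ι, u ∈ bag t ∧ v ∈ bag t
  connect : ∀ (v : V) (t₁ t₂ : ι) (p : T.Walk t₁ t₂), p.IsPath →
    v ∈ bag t₁ → v ∈ bag t₂ → ∀ t ∈ p.support, v ∈ bag t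

/-- With the tree rooted at `r`, node `s` lies in the subtree rooted at `t`. -/
def inSubtree {ι : Type*} (T : SimpleGraph ι) (r t s : ι) : Prop :=
  ∀ p : T.Walk r s, p.IsPath → t ∈ p.support

/-- `χ_{≤ t}`: union of all bags in the subtree rooted at `t`. -/
def chiLe {V : Type*} {ι : Type*} [DecidableEq V] (G : SimpleGraph V)
    (T : SimpleGraph ι) (D : TreeDecomp G T) (r t : ι) : Set V :=
  {v | ∃ s : ι, inSubtree T r t s ∧ v ∈ D.bag s}


open SimpleGraph

section TreeLemmas

variable {ι : Type*} {T : SimpleGraph ι}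

/-- Canonical path between two vertices of a tree. -/
noncomputable def upath (hT : T.IsTree) (a b : ι) : T.Walk a b :=
  letI := Classical.decEq ι
  (hT.isConnected.exists_walk_length_eq_dist a b).choose.bypass

lemma upath_isPath (hT : T.IsTree) (a b : ι) : (upath hT a b).IsPath := by
  classical exact Walk.bypass_isPath _

lemma upath_unique (hT : T.IsTree) {a b : ι} (p : T.Walk a b) (hp : p.IsPath) :
    p = upath hT a b :=
  congrArg Subtype.val
    (isAcyclic_iff_path_unique.mp hT.IsAcyclic ⟨p, hp⟩ ⟨upath hT a b, upath_isPath hT a b⟩)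

lemma upath_length (hT : T.IsTree) (a b : ι) : (upath hT a b).length = T.dist a b := by
  classical
  refine le_antisymm ?_ (SimpleGraph.dist_le _)
  have h := (hT.isConnected.exists_walk_length_eq_dist a b).choose_spec
  calc (upath hT a b).length
      ≤ (hT.isConnected.exists_walk_length_eq_dist a b).choose.length :=
        Walk.length_bypass_le _
    _ = T.dist a b := h

lemma dist_lt_of_mem_upath (hT : T.IsTree) {a b c : ι} (hc : c ∈ (upath hT a b).support)
    (hcb : c ≠ b) : T.dist a c < T.dist a b := by
  classical
  have h1 : T.dist a c ≤ ((upath hT a b).takeUntil c hc).length := SimpleGraph.dist_le _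
  have h3 : ((upath hT a b).takeUntil c hc).length + ((upath hT a b).dropUntil c hc).length
      = (upath hT a b).length := by
    rw [← Walk.length_append, Walk.take_spec]
  have h4 : ((upath hT a b).dropUntil c hc).length ≠ 0 := fun h =>
    hcb (Walk.eq_of_length_eq_zero h)
  have h5 := upath_length hT a b
  omega

lemma not_mem_upath_of_dist_le (hT : T.IsTree) {t s s' : ι}
    (h : T.dist t s' ≤ T.dist t s) (hne : s ≠ s') : s ∉ (upath hT t s').support :=
  fun hm => absurd (dist_lt_of_mem_upath hT hm hne) (not_lt.mpr h)

lemma upath_self (hT : T.IsTree) (t : ι) : upath hT t t = Walk.nil :=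
  (upath_unique hT Walk.nil Walk.IsPath.nil).symm

lemma getLast?_support {a b : ι} (p : T.Walk a b) : p.support.getLast? = some b := by
  induction p with
  | nil => rfl
  | @cons u v w h p ih =>
    rw [Walk.support_cons, p.support_eq_cons, List.getLast?_cons_cons, ← p.support_eq_cons]
    exact ih

lemma walk_exists_concat {a b : ι} (p : T.Walk a b) (h : a ≠ b) :
    ∃ (c : ι) (q : T.Walk a c) (had : T.Adj c b), p = q.concat had := by
  cases p with
  | nil => exact absurd rfl h
  | cons had q =>
    obtain ⟨x, q', h', heq⟩ := Walk.exists_cons_eq_concat had q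
    exact ⟨x, q', h', heq⟩

lemma parent_spec (hT : T.IsTree) {t s : ι} (hst : s ≠ t) :
    ∃ (p : ι) (Q : T.Walk t p) (had : T.Adj p s),
      upath hT t s = Q.concat had ∧ s ∉ Q.support := by
  obtain ⟨p, Q, had, hdec⟩ := walk_exists_concat (upath hT t s) (Ne.symm hst)
  refine ⟨p, Q, had, hdec, ?_⟩
  have hp := upath_isPath hT t s
  rw [hdec, Walk.isPath_def, Walk.support_concat,
    List.nodup_append] at hp
  intro hs
  exact hp.2.2 s hs s (by simp) rfl

end TreeLemmas

section DecompLemmas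

variable {V : Type*} {ι : Type*} [DecidableEq V] {G : SimpleGraph V} {T : SimpleGraph ι}

lemma inSubtree_self (T : SimpleGraph ι) (r t : ι) : inSubtree T r t t :=
  fun p _ => p.end_mem_support

lemma bag_of_separator (D : TreeDecomp G T) (r t : ι)
    {s s' : ι} (hs' : inSubtree T r t s') (hs : ¬ inSubtree T r t s)
    {v : V} (hv' : v ∈ D.bag s') (hv : v ∈ D.bag s) : v ∈ D.bag t := by
  classical
  unfold inSubtree at hs
  push_neg at hs
  obtain ⟨P, hP, htP⟩ := hs
  have hb : t ∈ (P.append (upath D.isTree s' s).reverse).bypass.support :=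
    hs' _ (Walk.bypass_isPath _)
  have hsub := Walk.support_bypass_subset _ hb
  rw [Walk.mem_support_append_iff] at hsub
  rcases hsub with h | h
  · exact absurd h htP
  · rw [Walk.support_reverse, List.mem_reverse] at h
    exact D.connect v s' s (upath D.isTree s' s) (upath_isPath _ _ _) hv' hv t h

lemma bag_parent (D : TreeDecomp G T)
    {t s c p : ι} {Q : T.Walk t p} {had : T.Adj p s}
    (hdec : upath D.isTree t s = Q.concat had)
    (hc : s ∉ (upath D.isTree t c).support)
    {a : V} (ha : a ∈ D.bag c) (has : a ∈ D.bag s) : a ∈ D.bag p := by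
  classical
  have hT := D.isTree
  have hcs : c ≠ s := fun h => hc (h ▸ Walk.end_mem_support _)
  obtain ⟨q, B', h', hB⟩ := walk_exists_concat (upath hT c s) hcs
  have hB'facts : B'.IsPath ∧ s ∉ B'.support := by
    have hp := upath_isPath hT c s
    rw [hB, Walk.isPath_def, Walk.support_concat,
      List.nodup_append] at hp
    exact ⟨Walk.isPath_def _ |>.mpr hp.1, fun hs => hp.2.2 s hs s (by simp) rfl⟩
  have hsW : s ∉ ((upath hT t c).append B').support := by
    rw [Walk.mem_support_append_iff]
    rintro (h | h)
    · exact hc h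
    · exact hB'facts.2 h
  have hbyeq : ((upath hT t c).append B').bypass = upath hT t q :=
    upath_unique hT _ (Walk.bypass_isPath _)
  have hs_utq : s ∉ (upath hT t q).support := fun hm =>
    hsW (Walk.support_bypass_subset _ (hbyeq ▸ hm))
  have hpath : ((upath hT t q).concat h').IsPath := by
    rw [Walk.isPath_def, Walk.support_concat, List.nodup_append]
    refine ⟨(upath_isPath hT t q).support_nodup, List.nodup_singleton _, ?_⟩
    intro x hx x' hx' hxx
    simp only [List.mem_singleton] at hx'
    exact hs_utq (by rw [← hx', ← hxx]; exact hx)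
  have hequp : (upath hT t q).concat h' = upath hT t s := upath_unique hT _ hpath
  have hsupp : (upath hT t q).support.concat s = Q.support.concat s := by
    rw [List.concat_eq_append, List.concat_eq_append, ← Walk.support_concat _ h', ← Walk.support_concat _ had, hequp, hdec]
  have hsupp2 : (upath hT t q).support = Q.support := by
    have h := congrArg List.dropLast hsupp
    simpa [List.concat_eq_append] using h
  have hq : q = p := by
    have h1 := getLast?_support (upath hT t q)
    have h2 := getLast?_support Q
    rw [hsupp2, h2] at h1
    exact (Option.some.inj h1).symm
  subst hq
  have hpB : q ∈ (upath hT c s).support := by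
    rw [hB, Walk.support_concat, List.mem_append]
    exact Or.inl (Walk.end_mem_support B')
  exact D.connect a c s (upath hT c s) (upath_isPath hT c s) ha has q hpB

lemma push_up (D : TreeDecomp G T) (r t : ι)
    {s c c' : ι} {a b : V}
    (hsS : inSubtree T r t s) (hst : s ≠ t)
    (hc : s ∉ (upath D.isTree t c).support) (hc' : s ∉ (upath D.isTree t c').support)
    (ha : a ∈ D.bag c) (has : a ∈ D.bag s) (hb : b ∈ D.bag c') (hbs : b ∈ D.bag s) :
    ∃ p : ι, inSubtree T r t p ∧ T.dist t p < T.dist t s ∧ a ∈ D.bag p ∧ b ∈ D.bag p := by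
  classical
  obtain ⟨p, Q, had, hdec, hsQ⟩ := parent_spec D.isTree hst
  have hps : p ≠ s := fun h => hsQ (h ▸ Walk.end_mem_support Q)
  have hpmem : p ∈ (upath D.isTree t s).support := by
    rw [hdec, Walk.support_concat, List.mem_append]
    exact Or.inl (Walk.end_mem_support Q)
  refine ⟨p, ?_, dist_lt_of_mem_upath D.isTree hpmem hps,
    bag_parent D hdec hc ha has, bag_parent D hdec hc' hb hbs⟩
  intro P hP
  by_contra htP
  have hb2 : t ∈ (P.concat had).bypass.support := hsS _ (Walk.bypass_isPath _)
  have h := Walk.support_bypass_subset _ hb2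
  rw [Walk.support_concat, List.mem_append] at h
  rcases h with h | h
  · exact htP h
  · simp only [List.mem_singleton] at h
    exact hst h.symm

end DecompLemmas
section ChainLemmas

variable {V : Type*} {ι : Type*} [DecidableEq V] {G : SimpleGraph V} {T : SimpleGraph ι}

/-- A `≺`-chain where each consecutive pair lies in a bag of the subtree. -/
def Chain2 (D : TreeDecomp G T) (r t : ι) (M : V → V → Prop) : V → List (ι × V) → Prop
  | _, [] => True
  | a, (s, b) :: L => inSubtree T r t s ∧ a ∈ D.bag s ∧ b ∈ D.bag s ∧ M a b ∧
      Chain2 D r t M b L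

/-- Last vertex of a chain. -/
def lastV {V ι : Type*} (a : V) (L : List (ι × V)) : V := (L.map Prod.snd).getLastD a

/-- Total distance measure of a chain. -/
noncomputable def muW {V ι : Type*} (T : SimpleGraph ι) (t : ι) (L : List (ι × V)) : ℕ :=
  (L.map fun p => T.dist t p.1).sum

@[simp] lemma lastV_nil {V ι : Type*} (a : V) : lastV a ([] : List (ι × V)) = a := rfl

@[simp] lemma lastV_cons {V ι : Type*} (a b : V) (s : ι) (L : List (ι × V)) :
    lastV a ((s, b) :: L) = lastV b L := by
  rw [lastV, List.map_cons, List.getLastD_cons]; rfl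

@[simp] lemma muW_nil {V ι : Type*} (T : SimpleGraph ι) (t : ι) :
    muW T t ([] : List (ι × V)) = 0 := rfl

@[simp] lemma muW_cons {V ι : Type*} (T : SimpleGraph ι) (t : ι) (s : ι) (b : V)
    (L : List (ι × V)) : muW T t ((s, b) :: L) = T.dist t s + muW T t L := by
  simp [muW]

lemma getLastD_mem' {α : Type*} : ∀ (l : List α) (a : α), l ≠ [] → l.getLastD a ∈ l
  | [b], _, _ => by simp
  | b :: c :: l, a, _ => by
    rw [List.getLastD_cons]
    exact List.mem_cons_of_mem _ (getLastD_mem' (c :: l) b (by simp))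

lemma lastV_mem {V ι : Type*} (a : V) (L : List (ι × V)) (h : L ≠ []) :
    lastV a L ∈ L.map Prod.snd :=
  getLastD_mem' _ _ (by simpa using h)

end ChainLemmas
section Scan

variable {V : Type*} {ι : Type*} [DecidableEq V] {G : SimpleGraph V} {T : SimpleGraph ι}

lemma scan (D : TreeDecomp G T) (r t : ι) (M : V → V → Prop)
    (hM : ∀ s : ι, inSubtree T r t s → ∀ x y z : V,
      x ∈ D.bag s → y ∈ D.bag s → z ∈ D.bag s →
      x ≠ y → y ≠ z → x ≠ z → M x y → M y z → M x z)
    (L : List (ι × V)) :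
    ∀ (x b1 : V) (s1 c : ι),
      inSubtree T r t s1 → x ∈ D.bag s1 → b1 ∈ D.bag s1 → M x b1 →
      Chain2 D r t M b1 L →
      (x :: b1 :: L.map Prod.snd).Nodup →
      inSubtree T r t c → x ∈ D.bag c → s1 ≠ t → s1 ∉ (upath D.isTree t c).support →
      lastV b1 L ∈ D.bag t →
      ∃ L', Chain2 D r t M x L' ∧ L' ≠ [] ∧ lastV x L' = lastV b1 L ∧
        (L'.map Prod.snd).Sublist (b1 :: L.map Prod.snd) ∧
        L'.length + muW T t L' < (1 + L.length) + (T.dist t s1 + muW T t L) := by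
  induction L with
  | nil =>
    intro x b1 s1 c hS1 hx1 hb1 hM1 _ hnd hcS hxc hs1t hs1c hlast
    have hc't : s1 ∉ (upath D.isTree t t).support := by
      rw [upath_self]
      simpa using hs1t
    obtain ⟨p, hpS, hpd, hxp, hbp⟩ :=
      push_up D r t hS1 hs1t hs1c hc't hxc hx1 (by simpa using hlast) hb1
    refine ⟨[(p, b1)], ⟨hpS, hxp, hbp, hM1, trivial⟩, by simp, by simp, by simp, ?_⟩
    simp only [List.length_cons, List.length_nil, muW_cons, muW_nil]
    omega
  | cons hd L2 ih =>
    obtain ⟨s2, b2⟩ := hd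
    intro x b1 s1 c hS1 hx1 hb1 hM1 hch hnd hcS hxc hs1t hs1c hlast
    obtain ⟨hS2, hb12, hb2, hM2, hch2⟩ := hch
    by_cases h12 : s1 = s2
    · -- merge the two consecutive entries with the same bag
      subst h12
      have hxb1 : x ≠ b1 := by
        have := hnd; simp only [List.nodup_cons, List.mem_cons] at this; tauto
      have hb1b2 : b1 ≠ b2 := by
        have := hnd; simp only [List.nodup_cons, List.map_cons, List.mem_cons] at this; tauto
      have hxb2 : x ≠ b2 := by
        have := hnd; simp only [List.nodup_cons, List.map_cons, List.mem_cons] at this; tauto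
      have hMx2 : M x b2 := hM s1 hS1 x b1 b2 hx1 hb1 hb2 hxb1 hb1b2 hxb2 hM1 hM2
      refine ⟨(s1, b2) :: L2, ⟨hS1, hx1, hb2, hMx2, hch2⟩, by simp, by simp, ?_, ?_⟩
      · simp only [List.map_cons]
        exact (List.Sublist.refl _).cons b1
      · simp only [List.length_cons, muW_cons]
        omega
    · by_cases hd2 : T.dist t s2 ≤ T.dist t s1
      · -- push up s1
        have hs1s2 : s1 ∉ (upath D.isTree t s2).support :=
          not_mem_upath_of_dist_le D.isTree hd2 h12
        obtain ⟨p, hpS, hpd, hxp, hbp⟩ :=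
          push_up D r t hS1 hs1t hs1c hs1s2 hxc hx1 hb12 hb1
        refine ⟨(p, b1) :: (s2, b2) :: L2,
          ⟨hpS, hxp, hbp, hM1, hS2, hb12, hb2, hM2, hch2⟩, by simp, by simp, ?_, ?_⟩
        · simp
        · simp only [List.length_cons, muW_cons]
          omega
      · push_neg at hd2
        have hs2t : s2 ≠ t := by
          intro h
          rw [h, SimpleGraph.dist_self] at hd2
          omega
        have hs2s1 : s2 ∉ (upath D.isTree t s1).support :=
          not_mem_upath_of_dist_le D.isTree (le_of_lt hd2) (Ne.symm h12)
        have hnd2 : (b1 :: b2 :: L2.map Prod.snd).Nodup := by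
          have := hnd; simp only [List.nodup_cons, List.map_cons] at this ⊢; tauto
        obtain ⟨L2', hch', hne', hlast', hsub', hmeas'⟩ :=
          ih b1 b2 s2 s1 hS2 hb12 hb2 hM2 hch2 hnd2 hS1 hb1 hs2t hs2s1
            (by simpa using hlast)
        refine ⟨(s1, b1) :: L2', ⟨hS1, hx1, hb1, hM1, hch'⟩, by simp, ?_, ?_, ?_⟩
        · simp [hlast']
        · simp only [List.map_cons]
          exact hsub'.cons₂ b1
        · simp only [List.length_cons, muW_cons] at hmeas' ⊢
          omega

end Scan
section Main

variable {V : Type*} {ι : Type*} [DecidableEq V] {G : SimpleGraph V} {T : SimpleGraph ι}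

lemma mainLemma (D : TreeDecomp G T) (r t : ι) (M : V → V → Prop)
    (hM : ∀ s : ι, inSubtree T r t s → ∀ x y z : V,
      x ∈ D.bag s → y ∈ D.bag s → z ∈ D.bag s →
      x ≠ y → y ≠ z → x ≠ z → M x y → M y z → M x z) :
    ∀ (n : ℕ) (L : List (ι × V)) (x : V),
      L.length + muW T t L ≤ n → Chain2 D r t M x L →
      (x :: L.map Prod.snd).Nodup →
      x ∈ D.bag t → lastV x L ∈ D.bag t → L ≠ [] → M x (lastV x L) := by
  intro n
  induction n with
  | zero =>
    intro L x hlen _ _ _ _ hne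
    cases L with
    | nil => exact absurd rfl hne
    | cons hd L2 => simp at hlen
  | succ n ih =>
    intro L x hlen hch hnd hxt hyt hne
    cases L with
    | nil => exact absurd rfl hne
    | cons hd L2 =>
      obtain ⟨s1, b1⟩ := hd
      obtain ⟨hS1, hx1, hb1, hM1, hch2⟩ := hch
      by_cases hL2 : L2 = []
      · subst hL2
        simpa using hM1
      · by_cases hs1 : s1 = t
        · rw [hs1] at hx1 hb1 hlen
          have hlen2 : L2.length + muW T t L2 ≤ n := by
            simp only [List.length_cons, muW_cons, SimpleGraph.dist_self] at hlen
            omega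
          have hnd2 : (b1 :: L2.map Prod.snd).Nodup := by
            simp only [List.nodup_cons, List.map_cons] at hnd ⊢
            tauto
          have hyt2 : lastV b1 L2 ∈ D.bag t := by simpa using hyt
          have hb1y : M b1 (lastV b1 L2) := ih L2 b1 hlen2 hch2 hnd2 hb1 hyt2 hL2
          have hymem : lastV b1 L2 ∈ L2.map Prod.snd := lastV_mem b1 L2 hL2
          have hnd' := hnd
          simp only [List.nodup_cons, List.map_cons, List.mem_cons, not_or] at hnd'
          have hxb1 : x ≠ b1 := hnd'.1.1
          have hb1y' : b1 ≠ lastV b1 L2 := fun h => hnd'.2.1 (h ▸ hymem)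
          have hxy : x ≠ lastV b1 L2 := fun h => hnd'.1.2 (h ▸ hymem)
          have := hM t (inSubtree_self T r t) x b1 (lastV b1 L2) hxt hb1 hyt2
            hxb1 hb1y' hxy hM1 hb1y
          simpa using this
        · have hs1c : s1 ∉ (upath D.isTree t t).support := by
            rw [upath_self]; simpa using hs1
          obtain ⟨L', hch', hne', hlast', hsub', hmeas'⟩ :=
            scan D r t M hM L2 x b1 s1 t hS1 hx1 hb1 hM1 hch2 hnd
              (inSubtree_self T r t) hxt hs1 hs1c (by simpa using hyt)
          have hlen' : L'.length + muW T t L' ≤ n := by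
            simp only [List.length_cons, muW_cons] at hlen
            omega
          have hnd' : (x :: L'.map Prod.snd).Nodup := by
            have hsub2 : (x :: L'.map Prod.snd).Sublist (x :: b1 :: L2.map Prod.snd) :=
              hsub'.cons₂ x
            exact hsub2.nodup (by simpa using hnd)
          have hyt' : lastV x L' ∈ D.bag t := by
            rw [hlast']; simpa using hyt
          have := ih L' x hlen' hch' hnd' hxt hyt' hne'
          rw [hlast'] at this
          simpa using this

lemma commonBag (D : TreeDecomp G T) (r t : ι) {a b : V}
    (haS : ∃ s, inSubtree T r t s ∧ a ∈ D.bag s)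
    (hbS : ∃ s, inSubtree T r t s ∧ b ∈ D.bag s) (hadj : G.Adj a b) :
    ∃ s, inSubtree T r t s ∧ a ∈ D.bag s ∧ b ∈ D.bag s := by
  obtain ⟨s0, ha0, hb0⟩ := D.edgeCover hadj
  by_cases h : inSubtree T r t s0
  · exact ⟨s0, h, ha0, hb0⟩
  · obtain ⟨sa, hsa, ha⟩ := haS
    obtain ⟨sb, hsb, hb⟩ := hbS
    exact ⟨t, inSubtree_self T r t,
      bag_of_separator D r t hsa h ha ha0, bag_of_separator D r t hsb h hb hb0⟩

lemma buildChain (D : TreeDecomp G T) (r t : ι) (M : V → V → Prop) (y : V)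
    (hyS : ∃ s, inSubtree T r t s ∧ y ∈ D.bag s) :
    ∀ (l : List V) (a : V), (∃ s, inSubtree T r t s ∧ a ∈ D.bag s) →
      (∀ p ∈ l, ∃ s, inSubtree T r t s ∧ p ∈ D.bag s) →
      List.Chain' G.Adj (a :: (l ++ [y])) → List.Chain' M (a :: (l ++ [y])) →
      ∃ L, Chain2 D r t M a L ∧ L.map Prod.snd = l ++ [y] := by
  intro l
  induction l with
  | nil =>
    intro a haS _ hadj hM'
    have hAdj : G.Adj a y := by
      simp only [List.nil_append, List.Chain', List.isChain_cons_cons, List.isChain_singleton, and_true] at hadj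
      exact hadj
    have hMa : M a y := by
      simp only [List.nil_append, List.Chain', List.isChain_cons_cons, List.isChain_singleton, and_true] at hM'
      exact hM'
    obtain ⟨s, hsS, has, hys⟩ := commonBag D r t haS hyS hAdj
    exact ⟨[(s, y)], ⟨hsS, has, hys, hMa, trivial⟩, rfl⟩
  | cons p l' ih =>
    intro a haS hmem hadj hM'
    simp only [List.cons_append, List.Chain', List.isChain_cons_cons] at hadj hM'
    have hpS : ∃ s, inSubtree T r t s ∧ p ∈ D.bag s := hmem p (List.mem_cons_self (a := p) (l := l'))
    obtain ⟨s, hsS, has, hps⟩ := commonBag D r t haS hpS hadj.1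
    obtain ⟨L', hch', hmap⟩ := ih p hpS (fun q hq => hmem q (List.mem_cons_of_mem _ hq))
      hadj.2 hM'.2
    exact ⟨(s, p) :: L', ⟨hsS, has, hps, hM'.1, hch'⟩, by simp [hmap]⟩

end Main
/-- Transitive closure preservation along a tree decomposition: if the model `M`
satisfies the bagwise transitivity clauses at every node of the subtree rooted
at `t`, then for any path `x, p₁, …, p_o, y` of `G` with `x, y ∈ χ(t)`, all
intermediate vertices inside `χ_{≤t}`, and all consecutive `≺`-facts in `M`,
the fact `x ≺ y` is also in `M`. -/
theorem transitive_closure_along_treeDecomp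
    {V : Type*} {ι : Type*} [DecidableEq V]
    (G : SimpleGraph V) (T : SimpleGraph ι) (D : TreeDecomp G T)
    (r t : ι) (M : V → V → Prop)
    (hM : ∀ s : ι, inSubtree T r t s → ∀ x y z : V,
      x ∈ D.bag s → y ∈ D.bag s → z ∈ D.bag s →
      x ≠ y → y ≠ z → x ≠ z → M x y → M y z → M x z)
    (x y : V) (hx : x ∈ D.bag t) (hy : y ∈ D.bag t)
    (l : List V) (hmem : ∀ p ∈ l, p ∈ chiLe G T D r t)
    (hnodup : (x :: (l ++ [y])).Nodup)
    (hadj : List.Chain' G.Adj (x :: (l ++ [y])))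
    (hM' : List.Chain' M (x :: (l ++ [y]))) :
    M x y := by
  have hyS : ∃ s, inSubtree T r t s ∧ y ∈ D.bag s := ⟨t, inSubtree_self T r t, hy⟩
  have hxS : ∃ s, inSubtree T r t s ∧ x ∈ D.bag s := ⟨t, inSubtree_self T r t, hx⟩
  obtain ⟨L, hch, hmap⟩ := buildChain D r t M y hyS l x hxS (fun p hp => hmem p hp) hadj hM'
  have hlast : lastV x L = y := by
    rw [lastV, hmap]
    exact List.getLastD_concat
  have hne : L ≠ [] := by
    intro h
    rw [h] at hmap
    simp at hmap
  have hnd : (x :: L.map Prod.snd).Nodup := by rw [hmap]; exact hnodup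
  have := mainLemma D r t M hM (L.length + muW T t L) L x le_rfl hch hnd hx
    (hlast ▸ hy) hne
  rwa [hlast] at this
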